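/- Let m ≥ 1 and let a₀, a₁, …, a_{m+1} be the vertices of a regular simplex inscribed in the unit sphere of ℝ^{m+1}, i.e. vectors with ‖aᵢ‖ = 1 for all i and inner product ⟨aᵢ, aⱼ⟩ = −1/(m+1) for all i ≠ j. Then for all x, y ∈ ℝ^{m+1} with ‖x‖ = ‖y‖ = 1 there exists an index i ∈ {0, 1, …, m+1} such that ⟨aᵢ, x⟩ ≥ −1/√(m+1) and ⟨aᵢ, y⟩ ≥ −1/√(m+1). -/

import Mathlib

open Finset

private lemma signed_sum_sq (m : ℕ)
    (a : Fin (m + 2) → EuclideanSpace ℝ (Fin (m + 1)))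
    (ha : ∀ i, ‖a i‖ = 1)
    (hinner : ∀ i j, i ≠ j → (inner ℝ (a i) (a j) : ℝ) = -(1 / (m + 1)))
    (ε : Fin (m + 2) → ℝ) :
    (inner ℝ (∑ i, ε i • a i) (∑ i, ε i • a i) : ℝ)
      = ((m + 2 : ℝ) / (m + 1)) * (∑ i, (ε i)^2) - (∑ i, ε i)^2 / (m + 1) := by
  have hg : ∀ i j : Fin (m + 2), (inner ℝ (a i) (a j) : ℝ)
      = ((m + 2 : ℝ) / (m + 1)) * (if i = j then 1 else 0) - 1 / (m + 1) := by
    intro i j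
    by_cases hij : i = j
    · subst hij
      have h1 : (inner ℝ (a i) (a i) : ℝ) = 1 := by
        rw [real_inner_self_eq_norm_sq, ha i]; norm_num
      rw [h1]
      have hm1 : (m : ℝ) + 1 ≠ 0 := by positivity
      field_simp
      simp only [if_true]
      ring
    · rw [hinner i j hij]
      simp [hij]
  rw [sum_inner]
  simp_rw [inner_sum, real_inner_smul_left, real_inner_smul_right, hg]
  have expand : ∀ i j : Fin (m + 2),
      ε i * (ε j * (((m + 2 : ℝ) / (m + 1)) * (if i = j then 1 else 0) - 1 / (m + 1)))
      = ((m + 2 : ℝ) / (m + 1)) * (if j = i then ε i * ε j else 0) - ε i * ε j * (1 / (m + 1)) := by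
    intro i j
    by_cases hij : i = j
    · subst hij; simp; ring
    · have hji : j ≠ i := fun h => hij h.symm
      simp [hij, hji]; ring
  simp_rw [expand, Finset.sum_sub_distrib, ← Finset.mul_sum]
  simp only [Finset.sum_ite_eq', Finset.mem_univ, if_true, ite_true]
  have h2 : ∑ i : Fin (m+2), ε i * ε i = ∑ i : Fin (m+2), (ε i)^2 :=
    Finset.sum_congr rfl fun i _ => (sq (ε i)).symm
  have h3 : ∑ i : Fin (m+2), ∑ j : Fin (m+2), ε i * ε j * (1 / ((m:ℝ) + 1))
      = (∑ i, ε i)^2 / ((m:ℝ) + 1) := by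
    rw [sq, Finset.sum_mul_sum, Finset.sum_div]
    exact Finset.sum_congr rfl fun i _ => by
      rw [Finset.sum_div]
      exact Finset.sum_congr rfl fun j _ => by ring
  rw [h2, h3]

theorem simplex_cap_covering (m : ℕ) (hm : 1 ≤ m)
    (a : Fin (m + 2) → EuclideanSpace ℝ (Fin (m + 1)))
    (ha : ∀ i, ‖a i‖ = 1)
    (hinner : ∀ i j, i ≠ j → (inner ℝ (a i) (a j) : ℝ) = -(1 / (m + 1)))
    (x y : EuclideanSpace ℝ (Fin (m + 1))) (hx : ‖x‖ = 1) (hy : ‖y‖ = 1) :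
    ∃ i : Fin (m + 2),
      -(1 / Real.sqrt (m + 1)) ≤ (inner ℝ (a i) x : ℝ) ∧
      -(1 / Real.sqrt (m + 1)) ≤ (inner ℝ (a i) y : ℝ) := by
  by_contra hcon
  push_neg at hcon
  have hm1 : (0:ℝ) < (m:ℝ) + 1 := by positivity
  have hs : (0:ℝ) < Real.sqrt ((m:ℝ) + 1) := Real.sqrt_pos.2 hm1
  have hs2 : Real.sqrt ((m:ℝ) + 1) ^ 2 = (m:ℝ) + 1 := Real.sq_sqrt hm1.le
  set t : ℝ := 1 / Real.sqrt ((m:ℝ) + 1) with ht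
  have ht0 : 0 < t := by positivity
  -- sum of a i is zero
  have hsum0 : ∑ i, a i = 0 := by
    have h1 : ∑ i : Fin (m+2), (1:ℝ) • a i = ∑ i, a i := by simp
    have h := signed_sum_sq m a ha hinner (fun _ => 1)
    rw [h1] at h
    simp only [one_pow, Finset.sum_const, Finset.card_univ, Fintype.card_fin,
      nsmul_eq_mul, mul_one] at h
    have hz : (inner ℝ (∑ i, a i) (∑ i, a i) : ℝ) = 0 := by
      rw [h]
      push_cast
      field_simp
      ring
    exact inner_self_eq_zero.mp hz
  have hux : ∑ i, (inner ℝ (a i) x : ℝ) = 0 := by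
    rw [← sum_inner, hsum0, inner_zero_left]
  have huy : ∑ i, (inner ℝ (a i) y : ℝ) = 0 := by
    rw [← sum_inner, hsum0, inner_zero_left]
  set z := x - y with hz
  have hwz : ∀ i, (inner ℝ (a i) z : ℝ) = (inner ℝ (a i) x : ℝ) - (inner ℝ (a i) y : ℝ) := by
    intro i; rw [hz, inner_sub_right]
  set ε : Fin (m+2) → ℝ := fun i => if 0 ≤ (inner ℝ (a i) z : ℝ) then 1 else -1 with hε
  have hε2 : ∀ i, (ε i)^2 = 1 := by
    intro i; by_cases h : 0 ≤ (inner ℝ (a i) z : ℝ) <;> simp [hε, h]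
  have habs : ∀ i, ε i * (inner ℝ (a i) z : ℝ) = |(inner ℝ (a i) z : ℝ)| := by
    intro i
    rcases le_or_gt 0 (inner ℝ (a i) z : ℝ) with h | h
    · rw [abs_of_nonneg h]
      simp only [hε]
      rw [if_pos h, one_mul]
    · rw [abs_of_neg h]
      simp only [hε]
      rw [if_neg (not_le.2 h)]
      ring
  -- norm bound on the signed sum
  set S := ∑ i, ε i • a i with hS
  have hSsq : ‖S‖^2 ≤ (((m:ℝ) + 2) / Real.sqrt ((m:ℝ)+1))^2 := by
    have h := signed_sum_sq m a ha hinner ε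
    rw [← hS] at h
    have hnn : (inner ℝ S S : ℝ) = ‖S‖^2 := real_inner_self_eq_norm_sq S
    rw [hnn] at h
    simp_rw [hε2] at h
    simp only [Finset.sum_const, Finset.card_univ, Fintype.card_fin, nsmul_eq_mul,
      mul_one] at h
    have hnneg : 0 ≤ (∑ i, ε i)^2 / ((m:ℝ)+1) := by positivity
    have hrhs : (((m:ℝ) + 2) / Real.sqrt ((m:ℝ)+1))^2 = ((m:ℝ)+2)^2 / ((m:ℝ)+1) := by
      rw [div_pow, hs2]
    rw [hrhs]
    rw [h]
    push_cast
    have e : ((m:ℝ)+2)/((m:ℝ)+1) * ((m:ℝ)+2) = ((m:ℝ)+2)^2/((m:ℝ)+1) := by ring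
    rw [e]
    linarith
  have hSnorm : ‖S‖ ≤ ((m:ℝ) + 2) / Real.sqrt ((m:ℝ)+1) := by
    have hc : (0:ℝ) ≤ ((m:ℝ) + 2) / Real.sqrt ((m:ℝ)+1) := by positivity
    nlinarith [norm_nonneg S]
  have hznorm : ‖z‖ ≤ 2 := by
    calc ‖z‖ ≤ ‖x‖ + ‖y‖ := norm_sub_le x y
    _ = 2 := by rw [hx, hy]; norm_num
  -- upper bound on sum of absolute values
  have hup : ∑ i, |(inner ℝ (a i) z : ℝ)| ≤ 2 * ((m:ℝ) + 2) / Real.sqrt ((m:ℝ)+1) := by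
    have h1 : ∑ i, |(inner ℝ (a i) z : ℝ)| = (inner ℝ S z : ℝ) := by
      rw [hS, sum_inner]
      simp_rw [real_inner_smul_left, habs]
    rw [h1]
    calc (inner ℝ S z : ℝ) ≤ ‖S‖ * ‖z‖ := real_inner_le_norm S z
    _ ≤ (((m:ℝ) + 2) / Real.sqrt ((m:ℝ)+1)) * 2 := by
        apply mul_le_mul hSnorm hznorm (norm_nonneg z)
        positivity
    _ = 2 * ((m:ℝ) + 2) / Real.sqrt ((m:ℝ)+1) := by ring
  -- lower bound from the assumption
  have hlow : ∀ i : Fin (m+2),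
      (inner ℝ (a i) x : ℝ) + (inner ℝ (a i) y : ℝ) - |(inner ℝ (a i) z : ℝ)| < -2 * t := by
    intro i
    have h := hcon i
    rw [hwz i]
    set u := (inner ℝ (a i) x : ℝ)
    set v := (inner ℝ (a i) y : ℝ)
    have h1 : u - v ≤ |u - v| := le_abs_self _
    have h2 : -(u - v) ≤ |u - v| := neg_le_abs _
    by_cases hu : -t ≤ u
    · have hv : v < -t := h hu
      linarith
    · push_neg at hu
      linarith
  have hcard : (Finset.univ : Finset (Fin (m+2))).Nonempty := Finset.univ_nonempty
  have hsumlt : ∑ i, ((inner ℝ (a i) x : ℝ) + (inner ℝ (a i) y : ℝ) - |(inner ℝ (a i) z : ℝ)|)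
      < ∑ _i : Fin (m+2), (-2 * t) :=
    Finset.sum_lt_sum_of_nonempty hcard fun i _ => hlow i
  rw [Finset.sum_sub_distrib, Finset.sum_add_distrib, hux, huy] at hsumlt
  simp only [Finset.sum_const, Finset.card_univ, Fintype.card_fin, nsmul_eq_mul] at hsumlt
  have hkey : ((m:ℕ) + 2 : ℕ) * (-2 * t) = -(2 * ((m:ℝ) + 2) / Real.sqrt ((m:ℝ)+1)) := by
    rw [ht]
    push_cast
    field_simp
  rw [hkey] at hsumlt
  linarith
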